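/- Let S : V → W and T₁, …, Tₙ : Z → W be linear transformations. Then range S ⊆ span of ⋃_{i=1}^n range Tᵢ if and only if there exist linear transformations P₁, …, Pₙ : V → Z such that S = T₁∘P₁ + ⋯ + Tₙ∘Pₙ. -/
import Mathlib


theorem stmt_5 {D V W Z : Type*} [DivisionRing D]
    [AddCommGroup V] [Module D V] [AddCommGroup W] [Module D W]
    [AddCommGroup Z] [Module D Z]
    (n : ℕ) (hn : 0 < n) (S : V →ₗ[D] W) (T : Fin n → (Z →ₗ[D] W)) :
    LinearMap.range S ≤ (⨆ i, LinearMap.range (T i)) ↔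
      ∃ P : Fin n → (V →ₗ[D] Z), S = ∑ i, (T i).comp (P i) := by
  constructor
  · intro h
    set T' : (Fin n → Z) →ₗ[D] W := ∑ i, (T i).comp (LinearMap.proj i) with hT'
    have hle : (⨆ i, LinearMap.range (T i)) ≤ LinearMap.range T' := by
      apply iSup_le
      rintro i y ⟨z, rfl⟩
      refine ⟨Pi.single i z, ?_⟩
      simp only [hT', LinearMap.sum_apply, LinearMap.comp_apply, LinearMap.proj_apply]
      rw [Finset.sum_eq_single i]
      · simp
      · intro j _ hj
        simp [Pi.single_eq_of_ne hj]
      · simp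
    have h2 : LinearMap.range S ≤ LinearMap.range T' := h.trans hle
    have hsurj : Function.Surjective
        (T'.codRestrict (LinearMap.range T') (fun x => LinearMap.mem_range_self _ x)) := by
      rintro ⟨y, x, rfl⟩
      exact ⟨x, rfl⟩
    obtain ⟨g, hg⟩ := Module.projective_lifting_property
      (T'.codRestrict (LinearMap.range T') (fun x => LinearMap.mem_range_self _ x))
      (S.codRestrict (LinearMap.range T') (fun v => h2 (LinearMap.mem_range_self _ v)))
      hsurj
    refine ⟨fun i => (LinearMap.proj i).comp g, ?_⟩
    ext v
    have hv : T' (g v) = S v := congrArg Subtype.val (LinearMap.congr_fun hg v)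
    simp only [LinearMap.sum_apply, LinearMap.comp_apply, LinearMap.proj_apply]
    rw [← hv]
    simp [hT']
  · rintro ⟨P, rfl⟩
    rintro y ⟨v, rfl⟩
    rw [LinearMap.sum_apply]
    exact Submodule.sum_mem _ fun i _ =>
      Submodule.mem_iSup_of_mem i ⟨P i v, rfl⟩
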